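/- Let k ≥ 4 be an even integer, p a prime, ε ∈ {+1, −1}, and ℓ ≥ 5 a prime with ε·p^{k/2} ≡ −1 (mod ℓ). Set r = gcd(ℓ−1, k−1), let g₁ be the multiplicative order of p^r modulo ℓ, and put μ_p = ℓ if g₁ = 1 and μ_p = g₁ otherwise. Define 𝔣(n) = σ_{k−1}(n) + ε·p^{k/2}·σ_{k−1}(n/p) (with σ_{k−1}(n/p) = 0 if p ∤ n), and let S₁ = {n ≥ 1 : ℓ ∤ σ_r(n)} and S₂ = {n ≥ 1 : ℓ ∤ 𝔣(n)}. Then for every real s > 1, L_{S₂}(s) = L_{S₁}(s) · (1 − p^{−μ_p s}) / (1 − p^{−(μ_p−1)s}). -/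

import Mathlib

/-- `mySigma m n = ∑_{d ∣ n} d^m`, the sum of `m`-th powers of the divisors of `n`. -/
def mySigma (m n : ℕ) : ℕ := ∑ d ∈ n.divisors, d ^ m

/-- `frak k p ε n = σ_{k-1}(n) + ε p^{k/2} σ_{k-1}(n/p)`, where the last term is `0`
if `p ∤ n`. -/
def frak (k p : ℕ) (ε : ℤ) (n : ℕ) : ℤ :=
  (mySigma (k - 1) n : ℤ) +
    ε * (p : ℤ) ^ (k / 2) * (if p ∣ n then (mySigma (k - 1) (n / p) : ℤ) else 0)

/-- The Dirichlet series `L_S(s) = ∑_{n ∈ S} n^{-s}` of a set `S` of natural numbers. -/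
noncomputable def Lfun (S : Set ℕ) (s : ℝ) : ℝ := ∑' n : S, ((n : ℕ) : ℝ) ^ (-s)

set_option maxHeartbeats 1000000

lemma mySigma_eq (m n : ℕ) : mySigma m n = ArithmeticFunction.sigma m n := by
  simp [mySigma, ArithmeticFunction.sigma_apply]

lemma mySigma_mul (r : ℕ) {m n : ℕ} (h : Nat.Coprime m n) :
    mySigma r (m * n) = mySigma r m * mySigma r n := by
  simp only [mySigma_eq]
  exact ArithmeticFunction.isMultiplicative_sigma.map_mul_of_coprime h

lemma mySigma_cast_prime_pow {ℓ q : ℕ} (hq : q.Prime) (m a : ℕ) :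
    ((mySigma m (q ^ a) : ℕ) : ZMod ℓ)
      = ∑ j ∈ Finset.range (a + 1), ((q : ZMod ℓ) ^ m) ^ j := by
  rw [mySigma_eq, ArithmeticFunction.sigma_apply_prime_pow hq]
  push_cast
  exact Finset.sum_congr rfl fun j _ => by rw [pow_mul']

lemma geom_zero_iff {ℓ : ℕ} (hℓ : ℓ.Prime) (x : ZMod ℓ) (a : ℕ) :
    (∑ j ∈ Finset.range (a + 1), x ^ j = 0) ↔
      (if x = 1 then ℓ else orderOf x) ∣ (a + 1) := by
  haveI : Fact ℓ.Prime := ⟨hℓ⟩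
  by_cases h1 : x = 1
  · subst h1
    rw [if_pos rfl]
    simp only [one_pow, Finset.sum_const, Finset.card_range, nsmul_eq_mul, mul_one]
    exact ZMod.natCast_eq_zero_iff _ _
  · rw [if_neg h1, geom_sum_eq h1, div_eq_zero_iff]
    have hx1 : x - 1 ≠ 0 := sub_ne_zero.mpr h1
    simp only [hx1, or_false, sub_eq_zero]
    exact ⟨fun h => orderOf_dvd_of_pow_eq_one h, fun h => orderOf_dvd_iff_pow_eq_one.mp h⟩

lemma dvd_mySigma_prime_pow {ℓ q : ℕ} (hℓ : ℓ.Prime) (hq : q.Prime) (m a : ℕ) :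
    ℓ ∣ mySigma m (q ^ a) ↔
      (if (q : ZMod ℓ) ^ m = 1 then ℓ else orderOf ((q : ZMod ℓ) ^ m)) ∣ (a + 1) := by
  rw [← ZMod.natCast_eq_zero_iff, mySigma_cast_prime_pow hq, geom_zero_iff hℓ]

lemma gcd_order_eq {ℓ : ℕ} (hℓ : ℓ.Prime) (z : ZMod ℓ) (hz : z ≠ 0) {k r : ℕ}
    (hk1 : k - 1 ≠ 0) (hr : r = Nat.gcd (ℓ - 1) (k - 1)) :
    orderOf (z ^ (k - 1)) = orderOf (z ^ r) := by
  haveI : Fact ℓ.Prime := ⟨hℓ⟩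
  have ho : orderOf z ∣ ℓ - 1 :=
    orderOf_dvd_of_pow_eq_one (ZMod.pow_card_sub_one_eq_one hz)
  have hr0 : r ≠ 0 := by
    subst hr
    simp only [Ne, Nat.gcd_eq_zero_iff, not_and]
    exact fun _ => hk1
  rw [orderOf_pow' _ hk1, orderOf_pow' _ hr0]
  congr 1
  subst hr
  apply Nat.dvd_antisymm
  · exact Nat.dvd_gcd (Nat.gcd_dvd_left _ _)
      (Nat.dvd_gcd ((Nat.gcd_dvd_left _ _).trans ho) (Nat.gcd_dvd_right _ _))
  · exact Nat.dvd_gcd (Nat.gcd_dvd_left _ _)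
      ((Nat.gcd_dvd_right _ _).trans (Nat.gcd_dvd_right _ _))

lemma not_dvd_mySigma_ell_pow {ℓ : ℕ} (hℓ : ℓ.Prime) {m : ℕ} (hm : m ≠ 0) (a : ℕ) :
    ¬ ℓ ∣ mySigma m (ℓ ^ a) := by
  haveI : Fact ℓ.Prime := ⟨hℓ⟩
  rw [← ZMod.natCast_eq_zero_iff, mySigma_cast_prime_pow hℓ]
  rw [ZMod.natCast_self]
  rw [zero_pow hm]
  have : ∀ j ∈ Finset.range (a + 1), (0 : ZMod ℓ) ^ j = if j = 0 then 1 else 0 := by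
    intro j _; exact zero_pow_eq j
  rw [Finset.sum_congr rfl this, Finset.sum_ite_eq' (Finset.range (a+1)) 0 (fun _ => (1 : ZMod ℓ))]
  simp

lemma dvd_sigma_shift {ℓ k r : ℕ} (hℓ : ℓ.Prime) (hk : 4 ≤ k)
    (hr : r = Nat.gcd (ℓ - 1) (k - 1)) (n : ℕ) :
    ℓ ∣ mySigma (k - 1) n ↔ ℓ ∣ mySigma r n := by
  haveI : Fact ℓ.Prime := ⟨hℓ⟩
  have hk1 : k - 1 ≠ 0 := by omega
  have hr0 : r ≠ 0 := by
    subst hr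
    simp only [Ne, Nat.gcd_eq_zero_iff, not_and]
    exact fun _ => hk1
  induction n using Nat.recOnPosPrimePosCoprime with
  | prime_pow q a hq ha =>
    by_cases hqe : q = ℓ
    · subst hqe
      simp [not_dvd_mySigma_ell_pow hℓ hk1, not_dvd_mySigma_ell_pow hℓ hr0]
    · have hz : (q : ZMod ℓ) ≠ 0 := by
        rw [Ne, ZMod.natCast_eq_zero_iff]
        exact fun h => hqe ((Nat.prime_dvd_prime_iff_eq hℓ hq).mp h).symm
      rw [dvd_mySigma_prime_pow hℓ hq, dvd_mySigma_prime_pow hℓ hq]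
      have hord := gcd_order_eq hℓ _ hz hk1 hr
      have h1 : ((q : ZMod ℓ) ^ (k-1) = 1) ↔ ((q : ZMod ℓ) ^ r = 1) := by
        rw [← orderOf_eq_one_iff (x := (q : ZMod ℓ) ^ (k-1)), hord, orderOf_eq_one_iff]
      by_cases hc : (q : ZMod ℓ) ^ r = 1
      · rw [if_pos (h1.mpr hc), if_pos hc]
      · rw [if_neg (fun h => hc (h1.mp h)), if_neg hc, hord]
  | zero => simp [mySigma]
  | one => simp [mySigma]
  | coprime a b ha hb hab iha ihb =>
    rw [mySigma_mul _ hab, mySigma_mul _ hab, Nat.Prime.dvd_mul hℓ, Nat.Prime.dvd_mul hℓ]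
    tauto


lemma p_ne_ell {k p ℓ : ℕ} (hk : 4 ≤ k) (hℓ : ℓ.Prime) (hℓ5 : 5 ≤ ℓ)
    (ε : ℤ) (hcong : ε * (p : ℤ) ^ (k / 2) ≡ -1 [ZMOD (ℓ : ℤ)]) : p ≠ ℓ := by
  intro h
  subst h
  haveI : Fact p.Prime := ⟨hℓ⟩
  have h2 := (ZMod.intCast_eq_intCast_iff _ _ p).mpr hcong
  push_cast at h2
  rw [ZMod.natCast_self, zero_pow (by omega : k / 2 ≠ 0), mul_zero] at h2
  exact one_ne_zero (α := ZMod p) (by rw [← neg_eq_zero, h2])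

lemma frak_dvd_iff {k p ℓ : ℕ} (hk : 4 ≤ k) (hp : p.Prime) (hℓ : ℓ.Prime) (hℓ5 : 5 ≤ ℓ)
    {ε : ℤ} (hcong : ε * (p : ℤ) ^ (k / 2) ≡ -1 [ZMOD (ℓ : ℤ)])
    {r : ℕ} (hr : r = Nat.gcd (ℓ - 1) (k - 1))
    (a m : ℕ) (hm : ¬ p ∣ m) :
    ((ℓ : ℤ) ∣ frak k p ε (p ^ a * m)) ↔ ℓ ∣ mySigma r m := by
  haveI : Fact ℓ.Prime := ⟨hℓ⟩
  have hpne := p_ne_ell hk hℓ hℓ5 ε hcong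
  have hpz : (p : ZMod ℓ) ≠ 0 := by
    rw [Ne, ZMod.natCast_eq_zero_iff]
    exact fun h => hpne ((Nat.prime_dvd_prime_iff_eq hℓ hp).mp h).symm
  have heps : (ε : ZMod ℓ) * (p : ZMod ℓ) ^ (k / 2) = -1 := by
    have h2 := (ZMod.intCast_eq_intCast_iff _ _ ℓ).mpr hcong
    push_cast at h2
    exact h2
  rw [← ZMod.intCast_zmod_eq_zero_iff_dvd,
    ← dvd_sigma_shift hℓ hk hr m, ← ZMod.natCast_eq_zero_iff]
  cases a with
  | zero =>
    simp only [pow_zero, one_mul, frak, if_neg hm]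
    push_cast
    simp
  | succ b =>
    have hcop : Nat.Coprime p m := (Nat.Prime.coprime_iff_not_dvd hp).mpr hm
    have hco1 : Nat.Coprime (p ^ (b + 1)) m := Nat.Coprime.pow_left _ hcop
    have hco2 : Nat.Coprime (p ^ b) m := Nat.Coprime.pow_left _ hcop
    have hdvd : p ∣ p ^ (b + 1) * m := ⟨p ^ b * m, by ring⟩
    have hquot : (p ^ (b + 1) * m) / p = p ^ b * m := by
      rw [pow_succ', mul_assoc, Nat.mul_div_cancel_left _ hp.pos]
    rw [frak, if_pos hdvd, hquot, mySigma_mul (k - 1) hco1, mySigma_mul (k - 1) hco2]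
    push_cast
    rw [heps]
    set X := ((mySigma (k - 1) m : ℕ) : ZMod ℓ) with hX
    have hkey : ((mySigma (k - 1) (p ^ (b + 1)) : ℕ) : ZMod ℓ) * X +
        -1 * (((mySigma (k - 1) (p ^ b) : ℕ) : ZMod ℓ) * X)
        = ((p : ZMod ℓ) ^ (k - 1)) ^ (b + 1) * X := by
      rw [mySigma_cast_prime_pow hp, mySigma_cast_prime_pow hp, Finset.sum_range_succ]
      ring
    rw [hkey, mul_eq_zero]
    simp [pow_ne_zero, hpz]


lemma decomp_inj {p : ℕ} (hp : p.Prime) {a a' m m' : ℕ} (hm : ¬ p ∣ m) (hm' : ¬ p ∣ m')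
    (h : p ^ a * m = p ^ a' * m') : a = a' ∧ m = m' := by
  have hm0 : m ≠ 0 := fun h0 => hm (h0 ▸ dvd_zero p)
  have hm'0 : m' ≠ 0 := fun h0 => hm' (h0 ▸ dvd_zero p)
  have ha : a = a' := by
    have h1 := congrArg (fun n => n.factorization p) h
    simpa [Nat.factorization_mul (pow_ne_zero _ hp.pos.ne') hm0,
      Nat.factorization_mul (pow_ne_zero _ hp.pos.ne') hm'0,
      Nat.Prime.factorization_pow hp,
      Nat.factorization_eq_zero_of_not_dvd hm,
      Nat.factorization_eq_zero_of_not_dvd hm'] using h1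
  exact ⟨ha, by subst ha; exact Nat.eq_of_mul_eq_mul_left (pow_pos hp.pos a) h⟩

lemma Lfun_factor {p : ℕ} (hp : p.Prime) (A Q S : Set ℕ) (hQ : ∀ m ∈ Q, ¬ p ∣ m)
    (hS : S = {n : ℕ | ∃ a m, a ∈ A ∧ m ∈ Q ∧ n = p ^ a * m}) {s : ℝ} (hs : 1 < s) :
    Lfun S s = (∑' a : A, ((p : ℝ) ^ (-s)) ^ (a : ℕ)) * Lfun Q s := by
  have hp1 : (1 : ℝ) < p := by exact_mod_cast hp.one_lt
  have hq0 : (0 : ℝ) < (p : ℝ) ^ (-s) := Real.rpow_pos_of_pos (by positivity) _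
  have hq1 : (p : ℝ) ^ (-s) < 1 := Real.rpow_lt_one_of_one_lt_of_neg hp1 (by linarith)
  set q : ℝ := (p : ℝ) ^ (-s) with hqdef
  have hsum : Summable (fun n : ℕ => (n : ℝ) ^ (-s)) := Real.summable_nat_rpow.mpr (by linarith)
  have hF : Summable (fun a : A => q ^ (a : ℕ)) :=
    (summable_geometric_of_lt_one hq0.le hq1).subtype _
  have hG : Summable (fun m : Q => ((m : ℕ) : ℝ) ^ (-s)) := hsum.subtype _
  have hFG : Summable (fun x : A × Q => q ^ (x.1 : ℕ) * ((x.2 : ℕ) : ℝ) ^ (-s)) :=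
    Summable.mul_of_nonneg hF hG (fun a => (pow_pos hq0 _).le)
      (fun m => Real.rpow_nonneg (by positivity) _)
  let e : A × Q → S := fun x => ⟨p ^ (x.1 : ℕ) * (x.2 : ℕ), by
    rw [hS]; exact ⟨x.1, x.2, x.1.2, x.2.2, rfl⟩⟩
  have hbij : Function.Bijective e := by
    constructor
    · rintro ⟨⟨a, haA⟩, ⟨m, hmQ⟩⟩ ⟨⟨a', haA'⟩, ⟨m', hmQ'⟩⟩ hmm
      have h2 := Subtype.ext_iff.mp hmm
      obtain ⟨h3, h4⟩ := decomp_inj hp (hQ m hmQ) (hQ m' hmQ') h2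
      simp only [Prod.ext_iff, Subtype.ext_iff]
      exact ⟨h3, h4⟩
    · rintro ⟨n, hn⟩
      rw [hS] at hn
      obtain ⟨a, m, haA, hmQ, rfl⟩ := hn
      exact ⟨(⟨a, haA⟩, ⟨m, hmQ⟩), rfl⟩
  have he := (Equiv.ofBijective e hbij).tsum_eq (fun n : S => ((n : ℕ) : ℝ) ^ (-s))
  have hpow : ∀ a : ℕ, ((p : ℝ) ^ (a : ℕ)) ^ (-s) = q ^ a := by
    intro a
    rw [← Real.rpow_natCast (p : ℝ) a, ← Real.rpow_mul (by positivity), mul_comm,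
      Real.rpow_mul (by positivity), Real.rpow_natCast]
  have hterm : ∀ x : A × Q, ((((e x : ℕ)) : ℝ)) ^ (-s)
      = q ^ (x.1 : ℕ) * ((x.2 : ℕ) : ℝ) ^ (-s) := by
    intro x
    show (((p ^ (x.1 : ℕ) * (x.2 : ℕ) : ℕ) : ℝ)) ^ (-s) = _
    push_cast
    rw [Real.mul_rpow (by positivity) (by positivity), hpow]
  rw [Lfun, ← he]
  calc ∑' x : A × Q, (((e x : ℕ)) : ℝ) ^ (-s)
      = ∑' x : A × Q, q ^ (x.1 : ℕ) * ((x.2 : ℕ) : ℝ) ^ (-s) := tsum_congr hterm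
    _ = _ := (Summable.tsum_mul_tsum hF hG hFG).symm

lemma tsum_T {q : ℝ} (hq0 : 0 ≤ q) (hq1 : q < 1) (ν : ℕ) :
    (∑' a : {a : ℕ | ¬ (ν + 2) ∣ (a + 1)}, q ^ (a : ℕ))
      = (1 - q)⁻¹ - q ^ (ν + 1) * (1 - q ^ (ν + 2))⁻¹ := by
  have hgeo : Summable fun a : ℕ => q ^ a := summable_geometric_of_lt_one hq0 hq1
  have h1 := Summable.tsum_add_tsum_compl (s := {a : ℕ | ¬ (ν + 2) ∣ (a + 1)})
    (hgeo.subtype _) (hgeo.subtype _)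
  have h2 : ∑' a : ℕ, q ^ a = (1 - q)⁻¹ := tsum_geometric_of_lt_one hq0 hq1
  have hf : Function.Bijective (fun j : ℕ =>
      (⟨j * (ν + 2) + (ν + 1), by
        simp only [Set.mem_compl_iff, Set.mem_setOf_eq, not_not]
        exact ⟨j + 1, by ring⟩⟩ : ↥({a : ℕ | ¬ (ν + 2) ∣ (a + 1)}ᶜ))) := by
    constructor
    · intro j j' hjj
      have h4 := Subtype.ext_iff.mp hjj
      simp only at h4
      exact Nat.eq_of_mul_eq_mul_right (by omega) (Nat.add_right_cancel h4)
    · rintro ⟨a, ha⟩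
      simp only [Set.mem_compl_iff, Set.mem_setOf_eq, not_not] at ha
      obtain ⟨c, hc⟩ := ha
      match c, hc with
      | 0, hc => rw [mul_zero] at hc; omega
      | d + 1, hc =>
        refine ⟨d, Subtype.ext ?_⟩
        show d * (ν + 2) + (ν + 1) = a
        have h5 : a + 1 = d * (ν + 2) + (ν + 1) + 1 := by rw [hc]; ring
        exact (Nat.succ_injective h5).symm
  have h3 : (∑' x : ↥({a : ℕ | ¬ (ν + 2) ∣ (a + 1)}ᶜ), q ^ (x : ℕ))
      = q ^ (ν + 1) * (1 - q ^ (ν + 2))⁻¹ := by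
    rw [← (Equiv.ofBijective _ hf).tsum_eq
      (fun x : ↥({a : ℕ | ¬ (ν + 2) ∣ (a + 1)}ᶜ) => q ^ (x : ℕ))]
    have hterm : ∀ j : ℕ, q ^ ((j * (ν + 2) + (ν + 1))) = (q ^ (ν + 2)) ^ j * q ^ (ν + 1) :=
      fun j => by rw [pow_add, pow_mul]; ring
    simp only [Equiv.ofBijective_apply]
    rw [tsum_congr hterm, tsum_mul_right,
      tsum_geometric_of_lt_one (by positivity) (pow_lt_one₀ hq0 hq1 (by omega))]
    ring
  linarith [h1]

theorem stmt11 (k p ℓ : ℕ) (hk : 4 ≤ k) (hke : Even k) (hp : p.Prime)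
    (ε : ℤ) (hε : ε = 1 ∨ ε = -1) (hℓ : ℓ.Prime) (hℓ5 : 5 ≤ ℓ)
    (hcong : ε * (p : ℤ) ^ (k / 2) ≡ -1 [ZMOD (ℓ : ℤ)])
    (r : ℕ) (hr : r = Nat.gcd (ℓ - 1) (k - 1))
    (g₁ : ℕ) (hg₁ : g₁ = orderOf ((p : ZMod ℓ) ^ r))
    (μ : ℕ) (hμ : μ = if g₁ = 1 then ℓ else g₁)
    (S₁ S₂ : Set ℕ)
    (hS₁ : S₁ = {n : ℕ | 1 ≤ n ∧ ¬ ℓ ∣ mySigma r n})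
    (hS₂ : S₂ = {n : ℕ | 1 ≤ n ∧ ¬ (ℓ : ℤ) ∣ frak k p ε n})
    (s : ℝ) (hs : 1 < s) :
    Lfun S₂ s =
      Lfun S₁ s * (1 - (p : ℝ) ^ (-(μ : ℝ) * s)) / (1 - (p : ℝ) ^ (-((μ : ℝ) - 1) * s)) := by
  haveI : Fact ℓ.Prime := ⟨hℓ⟩
  have hpne := p_ne_ell hk hℓ hℓ5 ε hcong
  have hpz : (p : ZMod ℓ) ≠ 0 := by
    rw [Ne, ZMod.natCast_eq_zero_iff]
    exact fun h => hpne ((Nat.prime_dvd_prime_iff_eq hℓ hp).mp h).symm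
  have hk1 : k - 1 ≠ 0 := by omega
  -- g₁ is nonzero
  have hg₁0 : g₁ ≠ 0 := by
    have hxne : ((p : ZMod ℓ) ^ r) ≠ 0 := pow_ne_zero _ hpz
    have ho : orderOf ((p : ZMod ℓ) ^ r) ∣ ℓ - 1 :=
      orderOf_dvd_of_pow_eq_one (ZMod.pow_card_sub_one_eq_one hxne)
    intro h0
    rw [hg₁] at h0
    rw [h0] at ho
    have := Nat.eq_zero_of_zero_dvd ho
    omega
  have hμ2 : 2 ≤ μ := by
    rw [hμ]
    split
    · omega
    · omega
  -- the common factor set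
  set Q : Set ℕ := {m : ℕ | ¬ p ∣ m ∧ ¬ ℓ ∣ mySigma r m} with hQdef
  have hQ : ∀ m ∈ Q, ¬ p ∣ m := fun m hm => hm.1
  have hμ' : μ = if (p : ZMod ℓ) ^ r = 1 then ℓ else orderOf ((p : ZMod ℓ) ^ r) := by
    rw [hμ, hg₁]
    by_cases hx : (p : ZMod ℓ) ^ r = 1
    · rw [if_pos hx, if_pos (orderOf_eq_one_iff.mpr hx)]
    · rw [if_neg hx, if_neg (fun h => hx (orderOf_eq_one_iff.mp h))]
  have hμdvd : ∀ a : ℕ, ℓ ∣ mySigma r (p ^ a) ↔ μ ∣ (a + 1) := by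
    intro a
    rw [dvd_mySigma_prime_pow hℓ hp, ← hμ']
  -- decomposition of the two sets
  have hS₂' : S₂ = {n : ℕ | ∃ a m, a ∈ (Set.univ : Set ℕ) ∧ m ∈ Q ∧ n = p ^ a * m} := by
    rw [hS₂]
    ext n
    simp only [Set.mem_setOf_eq, Set.mem_univ, true_and]
    constructor
    · rintro ⟨hn1, hn2⟩
      refine ⟨n.factorization p, ordCompl[p] n, ?_⟩
      have hdec : p ^ n.factorization p * ordCompl[p] n = n :=
        Nat.ordProj_mul_ordCompl_eq_self n p
      have hmnd : ¬ p ∣ ordCompl[p] n := Nat.not_dvd_ordCompl hp (by omega)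
      rw [← hdec] at hn2
      exact ⟨⟨hmnd, fun hd => hn2 ((frak_dvd_iff hk hp hℓ hℓ5 hcong hr _ _ hmnd).mpr hd)⟩,
        hdec.symm⟩
    · rintro ⟨a, m, ⟨hm1, hm2⟩, rfl⟩
      have hm0 : m ≠ 0 := fun h0 => hm1 (h0 ▸ dvd_zero p)
      refine ⟨Nat.one_le_iff_ne_zero.mpr (by simp [hm0, hp.pos.ne']), ?_⟩
      exact fun hd => hm2 ((frak_dvd_iff hk hp hℓ hℓ5 hcong hr _ _ hm1).mp hd)
  have hS₁' : S₁ = {n : ℕ | ∃ a m, a ∈ {a : ℕ | ¬ μ ∣ (a + 1)} ∧ m ∈ Q ∧ n = p ^ a * m} := by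
    rw [hS₁]
    ext n
    simp only [Set.mem_setOf_eq]
    constructor
    · rintro ⟨hn1, hn2⟩
      refine ⟨n.factorization p, ordCompl[p] n, ?_⟩
      have hdec : p ^ n.factorization p * ordCompl[p] n = n :=
        Nat.ordProj_mul_ordCompl_eq_self n p
      have hmnd : ¬ p ∣ ordCompl[p] n := Nat.not_dvd_ordCompl hp (by omega)
      have hcop : Nat.Coprime (p ^ n.factorization p) (ordCompl[p] n) :=
        Nat.Coprime.pow_left _ ((Nat.Prime.coprime_iff_not_dvd hp).mpr hmnd)
      rw [← hdec, mySigma_mul r hcop, Nat.Prime.dvd_mul hℓ] at hn2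
      push_neg at hn2
      exact ⟨fun hd => hn2.1 ((hμdvd _).mpr hd), ⟨hmnd, hn2.2⟩, hdec.symm⟩
    · rintro ⟨a, m, ha, ⟨hm1, hm2⟩, rfl⟩
      have hm0 : m ≠ 0 := fun h0 => hm1 (h0 ▸ dvd_zero p)
      have hcop : Nat.Coprime (p ^ a) m :=
        Nat.Coprime.pow_left _ ((Nat.Prime.coprime_iff_not_dvd hp).mpr hm1)
      refine ⟨Nat.one_le_iff_ne_zero.mpr (by simp [hm0, hp.pos.ne']), ?_⟩
      rw [mySigma_mul r hcop, Nat.Prime.dvd_mul hℓ]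
      rintro (hd | hd)
      · exact ha ((hμdvd _).mp hd)
      · exact hm2 hd
  -- factor the L-functions
  have hL₂ := Lfun_factor hp (Set.univ) Q S₂ hQ hS₂' hs
  have hL₁ := Lfun_factor hp {a : ℕ | ¬ μ ∣ (a + 1)} Q S₁ hQ hS₁' hs
  -- numerics
  have hp1 : (1 : ℝ) < p := by exact_mod_cast hp.one_lt
  have hq0 : (0 : ℝ) < (p : ℝ) ^ (-s) := Real.rpow_pos_of_pos (by positivity) _
  have hq1 : (p : ℝ) ^ (-s) < 1 := Real.rpow_lt_one_of_one_lt_of_neg hp1 (by linarith)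
  set q : ℝ := (p : ℝ) ^ (-s) with hqdef
  obtain ⟨ν, rfl⟩ : ∃ ν, μ = ν + 2 := ⟨μ - 2, by omega⟩
  have hgu : (∑' a : (Set.univ : Set ℕ), q ^ (a : ℕ)) = (1 - q)⁻¹ := by
    rw [tsum_univ (fun a : ℕ => q ^ a)]
    exact tsum_geometric_of_lt_one hq0.le hq1
  have hgt := tsum_T hq0.le hq1 ν
  rw [hL₂, hL₁, hgu, hgt]
  -- convert the rpow powers
  have hpow : ∀ a : ℕ, (p : ℝ) ^ (-(a : ℝ) * s) = q ^ a := by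
    intro a
    rw [show -(a : ℝ) * s = (-s) * (a : ℕ) by push_cast; ring,
      Real.rpow_mul (by positivity), Real.rpow_natCast]
  have h1 : (p : ℝ) ^ (-((ν + 2 : ℕ) : ℝ) * s) = q ^ (ν + 2) := hpow (ν + 2)
  have h2 : (p : ℝ) ^ (-(((ν + 2 : ℕ) : ℝ) - 1) * s) = q ^ (ν + 1) := by
    rw [show -(((ν + 2 : ℕ) : ℝ) - 1) * s = -((ν + 1 : ℕ) : ℝ) * s by push_cast; ring]
    exact hpow (ν + 1)
  rw [h1, h2]
  -- final algebra
  have hne1 : 1 - q ≠ 0 := by nlinarith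
  have hne2 : 1 - q ^ (ν + 2) ≠ 0 := by
    have := pow_lt_one₀ hq0.le hq1 (n := ν + 2) (by omega)
    nlinarith
  have hne3 : 1 - q ^ (ν + 1) ≠ 0 := by
    have := pow_lt_one₀ hq0.le hq1 (n := ν + 1) (by omega)
    nlinarith
  field_simp
  ring
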